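/- arXiv:2111.07323 — 2 statements merged into one kernel-verified Lean document; each statement's English description precedes it below -/
import Mathlib

section
/- Let K ⊆ ℝⁿ be a convex polytope with nonempty interior having exactly m+1 vertices. Then for every positive integer l, Γ_l(K) ≤ Γ_l(K_m^{1*}). -/
open Set Pointwise

lemma simplex_convex (m : ℕ) :
    Convex ℝ {x : Fin m → ℝ | (∑ i, x i) ≤ 1 ∧ ∀ i, 0 ≤ x i} := by
  intro x hx y hy a b ha hb hab
  refine ⟨?_, fun i => add_nonneg (mul_nonneg ha (hx.2 i)) (mul_nonneg hb (hy.2 i))⟩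
  have : ∑ i, (a • x + b • y) i = a * ∑ i, x i + b * ∑ i, y i := by
    simp [Finset.sum_add_distrib, Finset.mul_sum]
  rw [this]
  calc a * ∑ i, x i + b * ∑ i, y i ≤ a * 1 + b * 1 :=
        add_le_add (mul_le_mul_of_nonneg_left hx.1 ha) (mul_le_mul_of_nonneg_left hy.1 hb)
    _ = 1 := by linarith

lemma covering_le_aux (n m l : ℕ) (hl : 0 < l) (hn : 0 < n) (hm : 0 < m)
    (K : Set (Fin n → ℝ)) (v : Fin (m + 1) → (Fin n → ℝ))
    (hK : K = convexHull ℝ (Set.range v)) :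
    (sInf {γ : ℝ | 0 < γ ∧ ∃ C : Set (Fin n → ℝ), C.Finite ∧ C.ncard = l ∧ K ⊆ C + γ • K}) ≤
    sInf {γ : ℝ | 0 < γ ∧ ∃ C : Set (Fin m → ℝ), C.Finite ∧ C.ncard = l ∧
      {x : Fin m → ℝ | (∑ i, x i) ≤ 1 ∧ ∀ i, 0 ≤ x i} ⊆
        C + γ • {x : Fin m → ℝ | (∑ i, x i) ≤ 1 ∧ ∀ i, 0 ≤ x i}} := by
  classical
  haveI : Infinite (Fin m → ℝ) :=
    Infinite.of_injective (fun r : ℝ => fun _ => r)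
      (fun a b h => congrFun h ⟨0, hm⟩)
  haveI : Infinite (Fin n → ℝ) :=
    Infinite.of_injective (fun r : ℝ => fun _ => r)
      (fun a b h => congrFun h ⟨0, hn⟩)
  set S : Set (Fin m → ℝ) := {x : Fin m → ℝ | (∑ i, x i) ≤ 1 ∧ ∀ i, 0 ≤ x i} with hSdef
  set L : (Fin m → ℝ) →ₗ[ℝ] (Fin n → ℝ) :=
    ∑ i : Fin m, LinearMap.smulRight (LinearMap.proj i) (v i.succ - v 0) with hLdef
  have hL : ∀ x : Fin m → ℝ, L x = ∑ i : Fin m, x i • (v i.succ - v 0) := by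
    intro x
    simp [hLdef, LinearMap.sum_apply]
  set T : (Fin m → ℝ) → (Fin n → ℝ) := fun x => v 0 + L x with hTdef
  have hvK : ∀ j, v j ∈ K := fun j => hK ▸ subset_convexHull ℝ _ (mem_range_self j)
  have hKconv : Convex ℝ K := hK ▸ convex_convexHull ℝ _
  -- T '' S ⊆ K
  have hTS_K : T '' S ⊆ K := by
    rintro _ ⟨x, hx, rfl⟩
    have hxT : T x = ∑ j : Fin (m + 1),
        (Fin.cases (1 - ∑ i, x i) x : Fin (m+1) → ℝ) j • v j := by
      rw [Fin.sum_univ_succ]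
      simp only [Fin.cases_zero, Fin.cases_succ, hTdef, hL]
      rw [show (∑ i : Fin m, x i • (v i.succ - v 0))
            = (∑ i : Fin m, x i • v i.succ) - (∑ i : Fin m, x i) • v 0 by
          rw [Finset.sum_smul]
          rw [← Finset.sum_sub_distrib]
          congr 1
          ext i
          rw [smul_sub]]
      module
    rw [hxT]
    refine hKconv.sum_mem ?_ ?_ (fun j _ => hvK j)
    · intro j _
      refine Fin.cases ?_ ?_ j
      · simpa using hx.1
      · intro i; simpa using hx.2 i
    · rw [Fin.sum_univ_succ]
      simp
  -- range v ⊆ T '' S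
  have hv_TS : Set.range v ⊆ T '' S := by
    rintro _ ⟨j, rfl⟩
    rcases Fin.eq_zero_or_eq_succ j with rfl | ⟨i, rfl⟩
    · refine ⟨0, ⟨by simp, fun i => le_refl 0⟩, ?_⟩
      simp [hTdef]
    · refine ⟨Pi.single i 1, ⟨?_, ?_⟩, ?_⟩
      · simp [Pi.single_apply]
      · intro j; rw [Pi.single_apply]; split <;> norm_num
      · simp only [hTdef, hL, Pi.single_apply, ite_smul, one_smul, zero_smul,
          Finset.sum_ite_eq', Finset.mem_univ, if_true]
        abel
  have hSconv : Convex ℝ S := simplex_convex m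
  have hTSconv : Convex ℝ (T '' S) := by
    have himg : T '' S = (fun y => v 0 + y) '' (⇑L '' S) := by
      rw [Set.image_image]
    rw [himg]
    exact (hSconv.linear_image L).translate (v 0)
  have hKT : K = T '' S := by
    refine Subset.antisymm ?_ hTS_K
    rw [hK]
    exact convexHull_min hv_TS hTSconv
  -- key algebraic identity
  have key : ∀ (γ : ℝ) (c t : Fin m → ℝ),
      T (c + γ • t) = (T c - γ • v 0) + γ • T t := by
    intro γ c t
    simp only [hTdef, map_add, map_smul]
    module
  -- the set for S is nonempty
  have hSne : ({γ : ℝ | 0 < γ ∧ ∃ C : Set (Fin m → ℝ), C.Finite ∧ C.ncard = l ∧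
      S ⊆ C + γ • S}).Nonempty := by
    obtain ⟨C, hC0, -, hCcard⟩ :=
      (Set.infinite_univ (α := Fin m → ℝ)).exists_superset_ncard_eq
        (subset_univ {0}) (finite_singleton 0) (k := l) (by rw [Set.ncard_singleton]; exact hl)
    refine ⟨1, one_pos, C, ?_, hCcard, ?_⟩
    · exact Set.finite_of_ncard_ne_zero (by omega)
    · intro x hx
      simpa using Set.add_mem_add (hC0 rfl) (Set.smul_mem_smul_set (a := (1:ℝ)) hx)
  -- subset relation
  have hsub : {γ : ℝ | 0 < γ ∧ ∃ C : Set (Fin m → ℝ), C.Finite ∧ C.ncard = l ∧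
        S ⊆ C + γ • S} ⊆
      {γ : ℝ | 0 < γ ∧ ∃ C : Set (Fin n → ℝ), C.Finite ∧ C.ncard = l ∧ K ⊆ C + γ • K} := by
    rintro γ ⟨hγ, C, hCfin, hCcard, hcov⟩
    obtain ⟨C', hC₀C', -, hC'card⟩ :=
      (Set.infinite_univ (α := Fin n → ℝ)).exists_superset_ncard_eq
        (subset_univ ((fun c => T c - γ • v 0) '' C)) (hCfin.image _)
        ((Set.ncard_image_le hCfin).trans hCcard.le)
    refine ⟨hγ, C', Set.finite_of_ncard_ne_zero (by omega), hC'card, ?_⟩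
    intro x hx
    rw [hKT] at hx
    obtain ⟨s, hs, rfl⟩ := hx
    obtain ⟨c, hc, t, ht, rfl⟩ := hcov hs
    obtain ⟨t₀, ht₀, rfl⟩ := ht
    rw [key γ c t₀]
    refine Set.add_mem_add (hC₀C' ⟨c, hc, rfl⟩) (Set.smul_mem_smul_set ?_)
    rw [hKT]
    exact mem_image_of_mem T ht₀
  exact csInf_le_csInf ⟨0, fun γ hγ => hγ.1.le⟩ hSne hsub

noncomputable def coveringFunctional {n : ℕ} (l : ℕ) (K : Set (Fin n → ℝ)) : ℝ :=
  sInf {γ : ℝ | 0 < γ ∧ ∃ C : Set (Fin n → ℝ), C.Finite ∧ C.ncard = l ∧ K ⊆ C + γ • K}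

/-- If `K ⊆ ℝⁿ` is a convex polytope with nonempty interior having exactly `m + 1`
vertices (extreme points), then `Γ_l(K) ≤ Γ_l(K_m^{1*})` for every positive integer `l`,
where `K_m^{1*}` is the standard `m`-dimensional simplex. -/
theorem coveringFunctional_le_simplex (n m : ℕ) (K : Set (Fin n → ℝ))
    (hpoly : ∃ V : Finset (Fin n → ℝ), K = convexHull ℝ (V : Set (Fin n → ℝ)))
    (hint : (interior K).Nonempty)
    (hvert : (Set.extremePoints ℝ K).ncard = m + 1)
    (l : ℕ) (hl : 0 < l) :
    coveringFunctional l K ≤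
      coveringFunctional l {x : Fin m → ℝ | (∑ i, x i) ≤ 1 ∧ ∀ i, 0 ≤ x i} := by
  classical
  obtain ⟨V, hV⟩ := hpoly
  have hKconv : Convex ℝ K := hV ▸ convex_convexHull ℝ _
  have hKcomp : IsCompact K := hV ▸ V.finite_toSet.isCompact_convexHull ℝ
  have hEfin : (Set.extremePoints ℝ K).Finite :=
    V.finite_toSet.subset (by rw [hV]; exact extremePoints_convexHull_subset)
  have hKcl : K = convexHull ℝ (Set.extremePoints ℝ K) := by
    have h1 := closure_convexHull_extremePoints hKcomp hKconv
    rw [← (hEfin.isCompact_convexHull ℝ).isClosed.closure_eq, h1]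
  cases n with
  | zero =>
    have hm0 : m = 0 := by
      have h1 : (Set.extremePoints ℝ K).ncard ≤ 1 := by
        have h2 := Set.ncard_le_ncard (subset_univ (Set.extremePoints ℝ K)) finite_univ
        rwa [Set.ncard_univ, Nat.card_unique] at h2
      omega
    subst hm0
    obtain ⟨x, hx⟩ := hint
    have hxK : x ∈ K := interior_subset hx
    have h0S : (fun _ : Fin 0 => (0 : ℝ)) ∈
        {x : Fin 0 → ℝ | (∑ i, x i) ≤ 1 ∧ ∀ i, 0 ≤ x i} := ⟨by simp, fun i => i.elim0⟩
    have hKuniv : K = {x : Fin 0 → ℝ | (∑ i, x i) ≤ 1 ∧ ∀ i, 0 ≤ x i} := by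
      ext y
      constructor
      · intro _
        exact Subsingleton.elim (fun _ : Fin 0 => (0 : ℝ)) y ▸ h0S
      · intro _
        exact Subsingleton.elim x y ▸ hxK
    rw [hKuniv]
  | succ n' =>
    rcases Nat.eq_zero_or_pos m with hm0 | hm
    · exfalso
      subst hm0
      obtain ⟨v0, hv0⟩ := Set.ncard_eq_one.mp hvert
      have hK1 : K = {v0} := by rw [hKcl, hv0, convexHull_singleton]
      rw [hK1, interior_singleton] at hint
      exact hint.ne_empty rfl
    · have hcard : hEfin.toFinset.card = m + 1 := by
        rw [← Set.ncard_eq_toFinset_card _ hEfin]; exact hvert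
      have hex : ∃ v : Fin (m + 1) → (Fin (n' + 1) → ℝ),
          Set.range v = Set.extremePoints ℝ K := by
        have e := hEfin.toFinset.equivFinOfCardEq hcard
        refine ⟨fun i => (e.symm i : _), ?_⟩
        ext x
        simp only [Set.mem_range]
        constructor
        · rintro ⟨i, rfl⟩
          exact hEfin.mem_toFinset.mp (e.symm i).2
        · intro hx
          exact ⟨e ⟨x, hEfin.mem_toFinset.mpr hx⟩, by rw [Equiv.symm_apply_apply]⟩
      obtain ⟨v, hrange⟩ := hex
      exact covering_le_aux (n' + 1) m l hl (Nat.succ_pos n') hm K v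
        (by rw [← hrange] at hKcl; exact hKcl)
end

section
/- Let K ⊆ ℝⁿ be a convex polytope with nonempty interior that is centrally symmetric (K = −K after translating its center to the origin) and has exactly 2m vertices ±v₁,…,±v_m. Then for every positive integer l, Γ_l(K) ≤ Γ_l(K_m^1). -/
open Set Pointwise

-- pairing lemma
lemma pairing {α : Type*} [AddCommGroup α] [Module ℝ α] [DecidableEq α] : ∀ (m : ℕ) (E : Finset α), E.card = 2*m →
    (∀ x ∈ E, -x ∈ E) → (0:α) ∉ E →
    ∃ g : Fin m → α, (E : Set α) = Set.range g ∪ Set.range (fun i => -g i) := by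
  intro m
  induction m with
  | zero =>
    intro E hcard _ _
    refine ⟨Fin.elim0, ?_⟩
    simp at hcard
    simp [hcard]
  | succ k ih =>
    intro E hcard hsymm h0
    have hne : E.Nonempty := by
      rw [← Finset.card_pos, hcard]; omega
    obtain ⟨e, he⟩ := hne
    have hne' : -e ∈ E := hsymm e he
    have hee : e ≠ -e := by
      intro h
      have h2 : e + e = 0 := by nth_rewrite 2 [h]; simp
      have : (2:ℝ) • e = 0 := by rw [two_smul]; exact h2
      have : e = 0 := by
        rcases smul_eq_zero.mp this with h' | h'
        · norm_num at h'
        · exact h'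
      exact h0 (this ▸ he)
    set E' := (E.erase e).erase (-e) with hE'
    have hcard' : E'.card = 2*k := by
      rw [hE', Finset.card_erase_of_mem (Finset.mem_erase.2 ⟨(Ne.symm hee), hne'⟩),
        Finset.card_erase_of_mem he, hcard]; omega
    have hsymm' : ∀ x ∈ E', -x ∈ E' := by
      intro x hx
      rw [hE', Finset.mem_erase, Finset.mem_erase] at hx ⊢
      exact ⟨fun h => hx.2.1 (neg_injective h), fun h => hx.1 (neg_eq_iff_eq_neg.mp h),
        hsymm x hx.2.2⟩
    have h0' : (0:α) ∉ E' := fun h => h0 (Finset.mem_of_mem_erase (Finset.mem_of_mem_erase h))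
    obtain ⟨g', hg'⟩ := ih E' hcard' hsymm' h0'
    refine ⟨Fin.cons e g', ?_⟩
    ext x
    simp only [Set.mem_union, Set.mem_range]
    constructor
    · intro hx
      by_cases hxe : x = e
      · exact Or.inl ⟨0, by simp [hxe]⟩
      by_cases hxne : x = -e
      · exact Or.inr ⟨0, by simp [hxne]⟩
      · have : x ∈ E' := by rw [hE']; exact Finset.mem_erase.2 ⟨hxne, Finset.mem_erase.2 ⟨hxe, hx⟩⟩
        have : x ∈ (E' : Set α) := this
        rw [hg'] at this
        rcases this with ⟨i, hi⟩ | ⟨i, hi⟩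
        · exact Or.inl ⟨i.succ, by simpa using hi⟩
        · exact Or.inr ⟨i.succ, by simpa using hi⟩
    · rintro (⟨i, rfl⟩ | ⟨i, rfl⟩)
      · rcases Fin.eq_zero_or_eq_succ i with rfl | ⟨j, rfl⟩
        · simpa using he
        · have : g' j ∈ (E' : Set α) := by rw [hg']; exact Or.inl ⟨j, rfl⟩
          simpa using Finset.mem_of_mem_erase (Finset.mem_of_mem_erase this)
      · rcases Fin.eq_zero_or_eq_succ i with rfl | ⟨j, rfl⟩
        · simpa using hne'
        · have : g' j ∈ (E' : Set α) := by rw [hg']; exact Or.inl ⟨j, rfl⟩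
          have := hsymm' _ this
          simpa using Finset.mem_of_mem_erase (Finset.mem_of_mem_erase this)

lemma convex_cross {m : ℕ} : Convex ℝ {x : Fin m → ℝ | (∑ i, |x i|) ≤ 1} := by
  intro a ha b hb θ₁ θ₂ hθ₁ hθ₂ hsum
  simp only [Set.mem_setOf_eq] at *
  calc ∑ i, |(θ₁ • a + θ₂ • b) i| ≤ ∑ i, (θ₁ * |a i| + θ₂ * |b i|) := by
        refine Finset.sum_le_sum fun i _ => ?_
        simp only [Pi.add_apply, Pi.smul_apply, smul_eq_mul]
        calc |θ₁ * a i + θ₂ * b i| ≤ |θ₁ * a i| + |θ₂ * b i| := abs_add_le _ _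
          _ = θ₁ * |a i| + θ₂ * |b i| := by
              rw [abs_mul, abs_mul, abs_of_nonneg hθ₁, abs_of_nonneg hθ₂]
    _ = θ₁ * ∑ i, |a i| + θ₂ * ∑ i, |b i| := by
        rw [Finset.sum_add_distrib, Finset.mul_sum, Finset.mul_sum]
    _ ≤ θ₁ * 1 + θ₂ * 1 := by
        gcongr
    _ = 1 := by rw [mul_one, mul_one, hsum]

lemma crossImage {n m : ℕ} (hm : 0 < m) (g : Fin m → (Fin n → ℝ)) :
    (fun x : Fin m → ℝ => ∑ i, x i • g i) '' {x | (∑ i, |x i|) ≤ 1}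
      = convexHull ℝ (Set.range g ∪ Set.range (fun i => -g i)) := by
  apply Set.Subset.antisymm
  · rintro _ ⟨x, hx, rfl⟩
    simp only [Set.mem_setOf_eq] at hx
    set s := ∑ i, |x i| with hs
    have hs0 : 0 ≤ s := Finset.sum_nonneg fun i _ => abs_nonneg _
    set i0 : Fin m := ⟨0, hm⟩
    -- weights on Fin m ⊕ Fin 2
    set w : Fin m ⊕ Fin 2 → ℝ := Sum.elim (fun i => |x i|) (fun _ => (1 - s)/2) with hw
    set p : Fin m ⊕ Fin 2 → (Fin n → ℝ) :=
      Sum.elim (fun i => if 0 ≤ x i then g i else -g i)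
        (fun j => if j = 0 then g i0 else -g i0) with hp
    show ∑ i, x i • g i ∈ _
    have key : ∑ i, x i • g i = ∑ j : Fin m ⊕ Fin 2, w j • p j := by
      rw [Fintype.sum_sum_type]
      have h1 : ∀ i : Fin m, w (Sum.inl i) • p (Sum.inl i) = x i • g i := by
        intro i
        simp only [hw, hp, Sum.elim_inl]
        by_cases h : 0 ≤ x i
        · rw [if_pos h, abs_of_nonneg h]
        · rw [if_neg h, abs_of_neg (lt_of_not_ge h), smul_neg, neg_smul, neg_neg]
      have h2 : ∑ j : Fin 2, w (Sum.inr j) • p (Sum.inr j) = 0 := by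
        rw [Fin.sum_univ_two]
        simp [hw, hp, smul_neg]
      rw [Finset.sum_congr rfl (fun i _ => h1 i), h2, add_zero]
    rw [key]
    refine Convex.sum_mem (convex_convexHull ℝ _) (fun j _ => ?_) ?_ (fun j _ => ?_)
    · rcases j with i | i
      · exact abs_nonneg _
      · simp only [hw, Sum.elim_inr]
        linarith
    · rw [Fintype.sum_sum_type]
      simp only [hw, Sum.elim_inl, Sum.elim_inr, Fin.sum_univ_two]
      rw [← hs]; ring
    · apply subset_convexHull
      rcases j with i | i
      · simp only [hp, Sum.elim_inl]
        by_cases h : 0 ≤ x i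
        · rw [if_pos h]; exact Or.inl ⟨i, rfl⟩
        · rw [if_neg h]; exact Or.inr ⟨i, rfl⟩
      · simp only [hp, Sum.elim_inr]
        by_cases h : i = 0
        · rw [if_pos h]; exact Or.inl ⟨i0, rfl⟩
        · rw [if_neg h]; exact Or.inr ⟨i0, rfl⟩
  · apply convexHull_min
    · rintro _ (⟨i, rfl⟩ | ⟨i, rfl⟩)
      · refine ⟨(Pi.single i 1 : Fin m → ℝ), ?_, ?_⟩
        · simp only [Set.mem_setOf_eq]
          have : ∀ j, |(Pi.single i 1 : Fin m → ℝ) j| = (Pi.single i 1 : Fin m → ℝ) j := by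
            intro j
            rcases eq_or_ne j i with rfl | h
            · simp
            · simp [Pi.single_eq_of_ne h]
          rw [Finset.sum_congr rfl (fun j _ => this j), Finset.sum_pi_single']
          simp
        · show (∑ j : Fin m, (Pi.single i 1 : Fin m → ℝ) j • g j) = g i
          have : ∀ j, (Pi.single i 1 : Fin m → ℝ) j • g j = (Pi.single i 1 : Fin m → ℝ) j • g i := by
            intro j
            rcases eq_or_ne j i with rfl | h
            · rfl
            · simp [Pi.single_eq_of_ne h]
          rw [Finset.sum_congr rfl (fun j _ => this j), ← Finset.sum_smul,
            Finset.sum_pi_single']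
          simp
      · refine ⟨-(Pi.single i 1 : Fin m → ℝ), ?_, ?_⟩
        · simp only [Set.mem_setOf_eq, Pi.neg_apply, abs_neg]
          have : ∀ j, |(Pi.single i 1 : Fin m → ℝ) j| = (Pi.single i 1 : Fin m → ℝ) j := by
            intro j
            rcases eq_or_ne j i with rfl | h
            · simp
            · simp [Pi.single_eq_of_ne h]
          rw [Finset.sum_congr rfl (fun j _ => this j), Finset.sum_pi_single']
          simp
        · show (∑ j : Fin m, (-(Pi.single i 1 : Fin m → ℝ)) j • g j) = -g i
          have : ∀ j, (-(Pi.single i 1 : Fin m → ℝ)) j • g j = (Pi.single i 1 : Fin m → ℝ) j • (-g i) := by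
            intro j
            rcases eq_or_ne j i with rfl | h
            · simp
            · simp [Pi.single_eq_of_ne h]
          rw [Finset.sum_congr rfl (fun j _ => this j), ← Finset.sum_smul,
            Finset.sum_pi_single']
          simp
    · have hlin : IsLinearMap ℝ (fun x : Fin m → ℝ => ∑ i, x i • g i) := by
        constructor
        · intro a b; simp [add_smul, Finset.sum_add_distrib]
        · intro r a; simp [mul_smul, ← Finset.smul_sum]
      exact convex_cross.is_linear_image hlin

lemma pad {α : Type*} [Infinite α] (D : Set α) (hD : D.Finite) (l : ℕ) (hl : D.ncard ≤ l) :
    ∃ D' : Set α, D ⊆ D' ∧ D'.Finite ∧ D'.ncard = l := by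
  obtain ⟨t, hts, htfin, htcard⟩ := (hD.infinite_compl).exists_subset_ncard_eq (l - D.ncard)
  refine ⟨D ∪ t, Set.subset_union_left, hD.union htfin, ?_⟩
  rw [Set.ncard_union_eq (Set.disjoint_of_subset_right hts disjoint_compl_right) hD htfin]
  omega

/-- If `K ⊆ ℝⁿ` is a convex polytope with nonempty interior which is centrally
symmetric (symmetric about some center `c`) and has exactly `2m` vertices (extreme
points), then `Γ_l(K) ≤ Γ_l(K_m^1)` for every positive integer `l`, where `K_m^1` is
the standard `m`-dimensional cross-polytope. -/
theorem coveringFunctional_le_crosspolytope (n m : ℕ) (K : Set (Fin n → ℝ))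
    (hpoly : ∃ V : Finset (Fin n → ℝ), K = convexHull ℝ (V : Set (Fin n → ℝ)))
    (hint : (interior K).Nonempty)
    (hsym : ∃ c : Fin n → ℝ, ∀ x, x ∈ K ↔ c + c - x ∈ K)
    (hvert : (Set.extremePoints ℝ K).ncard = 2 * m)
    (l : ℕ) (hl : 0 < l) :
    coveringFunctional l K ≤
      coveringFunctional l {x : Fin m → ℝ | (∑ i, |x i|) ≤ 1} := by
  classical
  obtain ⟨V, hV⟩ := hpoly
  obtain ⟨c, hc⟩ := hsym
  set P := {x : Fin m → ℝ | (∑ i, |x i|) ≤ 1} with hP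
  set E := Set.extremePoints ℝ K with hE
  have hKconv : Convex ℝ K := hV ▸ convex_convexHull ℝ _
  have hKcomp : IsCompact K := hV ▸ V.finite_toSet.isCompact_convexHull ℝ
  have hEsub : E ⊆ V := by rw [hE, hV]; exact extremePoints_convexHull_subset
  have hEfin : E.Finite := V.finite_toSet.subset hEsub
  have hKE : K = convexHull ℝ E := by
    conv_lhs => rw [← closure_convexHull_extremePoints hKcomp hKconv]
    exact (hEfin.isClosed_convexHull ℝ).closure_eq
  -- m ≥ 1
  have hm : 0 < m := by
    by_contra h
    push_neg at h
    interval_cases m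
    have : E = ∅ := by
      have := hvert; rw [mul_zero] at this
      exact (Set.ncard_eq_zero hEfin).mp this
    rw [hKE, this] at hint
    simp at hint
  -- symmetry of extreme points
  have hEsym : ∀ x ∈ E, c + c - x ∈ E := by
    intro x hx
    refine ⟨(hc x).1 hx.1, ?_⟩
    intro a ha b hb hseg
    obtain ⟨θ₁, θ₂, h1, h2, hsum, heq⟩ := hseg
    have hseg' : x ∈ openSegment ℝ (c + c - a) (c + c - b) := by
      refine ⟨θ₁, θ₂, h1, h2, hsum, ?_⟩
      have : θ₁ • (c + c - a) + θ₂ • (c + c - b)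
          = (θ₁ + θ₂) • (c + c) - (θ₁ • a + θ₂ • b) := by
        rw [smul_sub, smul_sub, add_smul]; abel
      rw [this, hsum, one_smul, heq]
      abel
    have ha' : c + c - a ∈ K := (hc a).1 ha
    have hb' : c + c - b ∈ K := (hc b).1 hb
    have ea := hx.2 ha' hb' hseg'
    rw [← ea]; abel
  -- c not an extreme point
  have hcE : c ∉ E := by
    intro hcmem
    have h2m : 1 < E.ncard := by rw [hvert]; omega
    obtain ⟨z, hz, hzc⟩ := Set.exists_ne_of_one_lt_ncard h2m c
    have hzK : z ∈ K := hz.1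
    have hzK' : c + c - z ∈ K := (hc z).1 hzK
    have hzne : z ≠ c + c - z := by
      intro h
      apply hzc
      have : z + z = c + c := by nth_rewrite 2 [h]; abel
      have h2 : (2:ℝ) • z = (2:ℝ) • c := by rw [two_smul, two_smul]; exact this
      have := smul_right_injective (Fin n → ℝ) (by norm_num : (2:ℝ) ≠ 0) h2
      exact this
    have hseg : c ∈ openSegment ℝ z (c + c - z) := by
      refine ⟨1/2, 1/2, by norm_num, by norm_num, by norm_num, ?_⟩
      ext i
      simp only [Pi.add_apply, Pi.sub_apply, Pi.smul_apply, smul_eq_mul]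
      ring
    have ez := hcmem.2 hzK hzK' hseg
    exact hzc ez
  -- the translated vertex finset
  set E' : Finset (Fin n → ℝ) := hEfin.toFinset.image (fun x => x - c) with hE'
  have hE'card : E'.card = 2 * m := by
    rw [hE', Finset.card_image_of_injective _ (fun a b h => by
      have := congrArg (· + c) h; simpa using this)]
    rw [← Set.ncard_eq_toFinset_card E hEfin]
    exact hvert
  have hE'symm : ∀ x ∈ E', -x ∈ E' := by
    intro x hx
    rw [hE', Finset.mem_image] at hx ⊢
    obtain ⟨y, hy, rfl⟩ := hx
    rw [Set.Finite.mem_toFinset] at hy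
    refine ⟨c + c - y, ?_, by abel⟩
    rw [Set.Finite.mem_toFinset]
    exact hEsym y hy
  have hE'0 : (0 : Fin n → ℝ) ∉ E' := by
    intro h
    rw [hE', Finset.mem_image] at h
    obtain ⟨y, hy, hy0⟩ := h
    rw [Set.Finite.mem_toFinset] at hy
    have : y = c := by
      have := congrArg (· + c) hy0; simpa using this
    exact hcE (this ▸ hy)
  obtain ⟨g, hg⟩ := pairing m E' hE'card hE'symm hE'0
  set T : (Fin m → ℝ) → (Fin n → ℝ) := fun x => ∑ i, x i • g i with hT
  have hTlin : IsLinearMap ℝ T := by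
    constructor
    · intro a b; simp [hT, add_smul, Finset.sum_add_distrib]
    · intro r a; simp [hT, mul_smul, ← Finset.smul_sum]
  -- K as affine image of P
  have hKP : K = (fun x => c + T x) '' P := by
    have hEim : E = (fun y => c + y) '' (E' : Set (Fin n → ℝ)) := by
      rw [hE']
      ext x
      simp only [Finset.coe_image, Set.image_image, Set.Finite.coe_toFinset, Set.mem_image]
      constructor
      · intro hx; exact ⟨x, hx, by abel⟩
      · rintro ⟨y, hy, rfl⟩
        have : c + (y - c) = y := by abel
        rw [this]; exact hy
    have himg : convexHull ℝ ((fun y => c + y) '' (E' : Set (Fin n → ℝ)))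
        = (fun y => c + y) '' convexHull ℝ (E' : Set (Fin n → ℝ)) := by
      have := (AffineEquiv.constVAdd ℝ (Fin n → ℝ) c).toAffineMap.image_convexHull
        (E' : Set (Fin n → ℝ))
      simpa [vadd_eq_add] using this.symm
    rw [hKE, hEim, himg, hg, ← crossImage hm g]
    rw [← hP, ← Set.image_comp]
    rfl
  -- infiniteness
  have hinfm : Infinite (Fin m → ℝ) :=
    Infinite.of_injective (fun t : ℝ => fun _ => t)
      (fun a b h => congrFun h ⟨0, hm⟩)
  have hinfn : Infinite (Fin n → ℝ) := by
    have hg0 : g ⟨0, hm⟩ ≠ 0 := by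
      intro h
      apply hE'0
      have : g ⟨0, hm⟩ ∈ (E' : Set (Fin n → ℝ)) := by
        rw [hg]; exact Or.inl ⟨⟨0, hm⟩, rfl⟩
      rw [h] at this
      exact this
    exact Infinite.of_injective (fun t : ℝ => t • g ⟨0, hm⟩)
      (smul_left_injective ℝ hg0)
  -- set inclusion of covering parameter sets
  have hsub : {γ : ℝ | 0 < γ ∧ ∃ C : Set (Fin m → ℝ), C.Finite ∧ C.ncard = l ∧ P ⊆ C + γ • P}
      ⊆ {γ : ℝ | 0 < γ ∧ ∃ C : Set (Fin n → ℝ), C.Finite ∧ C.ncard = l ∧ K ⊆ C + γ • K} := by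
    rintro γ ⟨hγ, C, hCfin, hCcard, hCcov⟩
    refine ⟨hγ, ?_⟩
    set C₀ : Set (Fin n → ℝ) := (fun u => c + T u - γ • c) '' C with hC₀
    have hC₀fin : C₀.Finite := hCfin.image _
    have hC₀card : C₀.ncard ≤ l := by
      rw [hC₀]
      calc _ ≤ C.ncard := Set.ncard_image_le hCfin
        _ = l := hCcard
    obtain ⟨C₁, hsub01, hC₁fin, hC₁card⟩ := pad C₀ hC₀fin l hC₀card
    refine ⟨C₁, hC₁fin, hC₁card, ?_⟩
    intro y hy
    rw [hKP] at hy
    obtain ⟨x, hx, rfl⟩ := hy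
    obtain ⟨u, hu, z, hz, hxz⟩ := hCcov hx
    obtain ⟨p, hp, rfl⟩ := hz
    have hk : c + T p ∈ K := by rw [hKP]; exact ⟨p, hp, rfl⟩
    have : c + T x = (c + T u - γ • c) + γ • (c + T p) := by
      rw [← hxz, hTlin.map_add, hTlin.map_smul]
      rw [smul_add]
      abel
    show c + T x ∈ C₁ + γ • K
    rw [this]
    exact Set.add_mem_add (hsub01 ⟨u, hu, rfl⟩) (Set.smul_mem_smul_set hk)
  -- S_P nonempty
  have hSP : ({γ : ℝ | 0 < γ ∧ ∃ C : Set (Fin m → ℝ),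
      C.Finite ∧ C.ncard = l ∧ P ⊆ C + γ • P}).Nonempty := by
    obtain ⟨C₁, hsub01, hC₁fin, hC₁card⟩ :=
      pad ({0} : Set (Fin m → ℝ)) (Set.finite_singleton 0) l
        (by rw [Set.ncard_singleton]; omega)
    refine ⟨1, one_pos, C₁, hC₁fin, hC₁card, ?_⟩
    intro x hx
    have : (0 : Fin m → ℝ) + x ∈ C₁ + (1:ℝ) • P := by
      refine Set.add_mem_add (hsub01 rfl) ?_
      rw [one_smul]
      exact hx
    simpa using this
  exact csInf_le_csInf ⟨0, fun γ hγ => le_of_lt hγ.1⟩ hSP hsub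
end
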